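/- Let F be the formal power series over ℚ whose n-th coefficient is C(n, n−1) for n ≥ 1 and is 0 for n = 0. Then (1 − 2x)·F = x. -/

import Mathlib

open scoped Classical

/-- Vertices `j` and `k` of `{1,…,n}` (encoded as `Fin n`, vertex `v` is `v+1`) are joined by
an edge determined by the composition `a`. -/
def CompEdge {n : ℕ} (a : Composition n) (j k : Fin n) : Prop :=
  j ≠ k ∧ ∃ i : Fin a.length,
    a.sizeUpTo i < (j : ℕ) + 1 ∧ (j : ℕ) + 1 ≤ a.sizeUpTo (i + 1) ∧
    a.sizeUpTo i < (k : ℕ) + 1 ∧ (k : ℕ) + 1 ≤ a.sizeUpTo (i + 1) ∧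
    ((j : ℕ) + 1) + ((k : ℕ) + 1) = 2 * a.sizeUpTo i + a.blocksFun i + 1

lemma CompEdge.symm {n : ℕ} {a : Composition n} {j k : Fin n} (h : CompEdge a j k) :
    CompEdge a k j := by
  obtain ⟨hne, i, h1, h2, h3, h4, h5⟩ := h
  exact ⟨hne.symm, i, h3, h4, h1, h2, by omega⟩

/-- The meander `M(a|b)` of the pair of compositions `(a, b)` of `n`. -/
def Meander {n : ℕ} (a b : Composition n) : SimpleGraph (Fin n) where
  Adj j k := CompEdge a j k ∨ CompEdge b j k
  symm := by
    constructor
    intro j k h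
    rcases h with h | h
    · exact Or.inl h.symm
    · exact Or.inr h.symm
  loopless := by
    constructor
    intro j h
    rcases h with ⟨hne, _⟩ | ⟨hne, _⟩ <;> exact hne rfl

/-- A connected component of the meander is a cycle if each of its vertices is incident
to both a top edge and a bottom edge. -/
def IsCycleComp {n : ℕ} (a b : Composition n) (c : (Meander a b).ConnectedComponent) : Prop :=
  ∀ v : Fin n, (Meander a b).connectedComponentMk v = c →
    (∃ w, CompEdge a v w) ∧ (∃ w, CompEdge b v w)

/-- The number of cycle components of the meander `M(a|b)`. -/
noncomputable def cycleCount {n : ℕ} (a b : Composition n) : ℕ :=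
  Nat.card {c : (Meander a b).ConnectedComponent // IsCycleComp a b c}

/-- The number of path components of the meander `M(a|b)`. -/
noncomputable def pathCount {n : ℕ} (a b : Composition n) : ℕ :=
  Nat.card {c : (Meander a b).ConnectedComponent // ¬ IsCycleComp a b c}

/-- The index `ind(a,b) = 2C + P - 1` of a pair of compositions of `n`. -/
noncomputable def seaweedInd {n : ℕ} (a b : Composition n) : ℕ :=
  2 * cycleCount a b + pathCount a b - 1

/-- `C(n,k)`: the number of ordered pairs of compositions of `n` of index `k`. -/
noncomputable def Cnk (n k : ℕ) : ℕ :=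
  Nat.card {p : Composition n × Composition n // seaweedInd p.1 p.2 = k}


lemma index_unique' {n : ℕ} (a : Composition n) {m : ℕ} {i i' : Fin a.length}
    (h1 : a.sizeUpTo i < m) (h2 : m ≤ a.sizeUpTo (i+1))
    (h3 : a.sizeUpTo i' < m) (h4 : m ≤ a.sizeUpTo (i'+1)) : i = i' := by
  by_contra hne
  rcases lt_or_gt_of_ne hne with h | h
  · have hh : (i:ℕ)+1 ≤ (i':ℕ) := h
    have := a.monotone_sizeUpTo hh
    omega
  · have hh : (i':ℕ)+1 ≤ (i:ℕ) := h
    have := a.monotone_sizeUpTo hh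
    omega

lemma CompEdge.unique {n : ℕ} {a : Composition n} {j k k' : Fin n}
    (h : CompEdge a j k) (h' : CompEdge a j k') : k = k' := by
  obtain ⟨-, i, h1, h2, -, -, h5⟩ := h
  obtain ⟨-, i', h1', h2', -, -, h5'⟩ := h'
  have hii : i = i' := index_unique' a h1 h2 h1' h2'
  subst hii
  exact Fin.ext (by omega)

lemma length_pos {n : ℕ} (hn : 0 < n) (a : Composition n) : 0 < a.length := by
  by_contra h
  have hl : a.length = 0 := by omega
  have hb : a.blocks = [] := List.length_eq_zero_iff.1 hl
  have hs := a.blocks_sum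
  rw [hb] at hs
  simp at hs
  omega

lemma compEdge_zero_iff {n : ℕ} (hn : 0 < n) (a : Composition n) (k : Fin n) :
    CompEdge a ⟨0, hn⟩ k ↔
      2 ≤ a.blocksFun ⟨0, length_pos hn a⟩ ∧ (k:ℕ) + 2 = a.blocksFun ⟨0, length_pos hn a⟩ + 1 := by
  have h0 : 0 < a.length := length_pos hn a
  have hs1 : a.sizeUpTo 1 = a.blocksFun ⟨0, h0⟩ := by
    have := a.sizeUpTo_succ' ⟨0, h0⟩
    simpa [a.sizeUpTo_zero] using this
  constructor
  · rintro ⟨hne, i, h1, h2, h3, h4, h5⟩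
    simp only [Fin.val_mk] at h1 h2 h5
    have hiz : (i:ℕ) = 0 := by
      by_contra hiz
      have h1i : (1:ℕ) ≤ (i:ℕ) := by omega
      have h1le := a.monotone_sizeUpTo h1i
      have hpos := a.one_le_blocksFun ⟨0, h0⟩
      omega
    have hi : i = ⟨0, h0⟩ := Fin.ext hiz
    subst hi
    rw [a.sizeUpTo_zero] at h5
    have hk0 : (k:ℕ) ≠ 0 := fun hk => hne (Fin.ext hk.symm)
    constructor <;> omega
  · rintro ⟨h2s, hk⟩
    have hkn : (k:ℕ) ≠ 0 := by omega
    refine ⟨fun h => hkn (show (k:ℕ) = 0 from (congrArg Fin.val h.symm)), ⟨0, h0⟩, ?_, ?_, ?_, ?_, ?_⟩ <;>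
      simp [a.sizeUpTo_zero, hs1] <;> omega

lemma sizeUpTo_cons {n s : ℕ} {l : List ℕ} (a : Composition n) (ha : a.blocks = s :: l)
    (a' : Composition (n - s)) (ha' : a'.blocks = l) (i : ℕ) :
    a.sizeUpTo (i + 1) = s + a'.sizeUpTo i := by
  simp [Composition.sizeUpTo, ha, ha', List.take_succ_cons]

lemma compEdge_shift {n s : ℕ} {l : List ℕ} (a : Composition n) (ha : a.blocks = s :: l)
    (a' : Composition (n - s)) (ha' : a'.blocks = l)
    (j k : Fin (n - s)) (hj : s + (j:ℕ) < n) (hk : s + (k:ℕ) < n) :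
    CompEdge a ⟨s + j, hj⟩ ⟨s + k, hk⟩ ↔ CompEdge a' j k := by
  have hlen : a.length = l.length + 1 := by simp [Composition.length, ha]
  have hlen' : a'.length = l.length := by simp [Composition.length, ha']
  have hsz : ∀ i : ℕ, a.sizeUpTo (i+1) = s + a'.sizeUpTo i := sizeUpTo_cons a ha a' ha'
  have hbf : ∀ (i : ℕ) (h : i < l.length),
      a.blocksFun ⟨i+1, by omega⟩ = a'.blocksFun ⟨i, by omega⟩ := by
    intro i h
    simp [Composition.blocksFun, ha, ha']
  constructor
  · rintro ⟨hne, i, h1, h2, h3, h4, h5⟩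
    simp only [Fin.val_mk] at h1 h2 h3 h4 h5
    have hne' : j ≠ k := by
      intro h
      exact hne (by subst h; rfl)
    have hipos : 0 < (i : ℕ) := by
      by_contra h
      have hiz : (i:ℕ) = 0 := by omega
      rw [hiz] at h2
      have e0 := hsz 0
      have h00 : a'.sizeUpTo 0 = 0 := a'.sizeUpTo_zero
      omega
    obtain ⟨i', hi'⟩ : ∃ i', (i:ℕ) = i' + 1 := ⟨(i:ℕ)-1, by omega⟩
    have hi'lt : i' < l.length := by have := i.2; omega
    have hieq : i = ⟨i'+1, by omega⟩ := Fin.ext hi'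
    rw [hieq, hbf i' hi'lt] at h5
    rw [hi'] at h1 h2 h3 h4
    simp only [Fin.val_mk] at h5
    have e1 := hsz i'
    have e2 := hsz (i'+1)
    have c1 : a'.sizeUpTo i' < (j:ℕ) + 1 := by omega
    have c2 : (j:ℕ) + 1 ≤ a'.sizeUpTo (i'+1) := by omega
    have c3 : a'.sizeUpTo i' < (k:ℕ) + 1 := by omega
    have c4 : (k:ℕ) + 1 ≤ a'.sizeUpTo (i'+1) := by omega
    have c5 : ((j:ℕ) + 1) + ((k:ℕ) + 1) = 2 * a'.sizeUpTo i' + a'.blocksFun ⟨i', by omega⟩ + 1 := by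
      omega
    exact ⟨hne', ⟨i', by omega⟩, c1, c2, c3, c4, c5⟩
  · rintro ⟨hne, i, h1, h2, h3, h4, h5⟩
    have hne2 : (⟨s + j, hj⟩ : Fin n) ≠ ⟨s + k, hk⟩ := by
      intro h
      apply hne
      have hv := congrArg Fin.val h
      simp only [Fin.val_mk] at hv
      exact Fin.ext (by omega)
    have hilt : (i:ℕ) < l.length := by have := i.2; omega
    have e1 := hsz (i:ℕ)
    have e2 := hsz ((i:ℕ)+1)
    have hb := hbf (i:ℕ) hilt
    have hb2 : a'.blocksFun ⟨(i:ℕ), by omega⟩ = a'.blocksFun i := rfl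
    rw [hb2] at hb
    have c1 : a.sizeUpTo ((i:ℕ)+1) < (s + (j:ℕ)) + 1 := by omega
    have c2 : (s + (j:ℕ)) + 1 ≤ a.sizeUpTo ((i:ℕ)+1+1) := by omega
    have c3 : a.sizeUpTo ((i:ℕ)+1) < (s + (k:ℕ)) + 1 := by omega
    have c4 : (s + (k:ℕ)) + 1 ≤ a.sizeUpTo ((i:ℕ)+1+1) := by omega
    have c5 : ((s + (j:ℕ)) + 1) + ((s + (k:ℕ)) + 1)
        = 2 * a.sizeUpTo ((i:ℕ)+1) + a.blocksFun ⟨(i:ℕ)+1, by omega⟩ + 1 := by omega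
    exact ⟨hne2, ⟨(i:ℕ)+1, by omega⟩, c1, c2, c3, c4, c5⟩

lemma comp_eq_of_edge_iff : ∀ (n : ℕ) (a b : Composition n),
    (∀ j k, CompEdge a j k ↔ CompEdge b j k) → a = b := by
  intro n
  induction n using Nat.strong_induction_on with
  | _ n IH =>
    intro a b h
    rcases Nat.eq_zero_or_pos n with hn | hn
    · subst hn
      have ea : a.blocks = [] := by
        cases hab : a.blocks with
        | nil => rfl
        | cons s l =>
          exfalso
          have hs := a.blocks_sum
          rw [hab] at hs
          have hp := a.blocks_pos (hab ▸ (List.mem_cons_self : s ∈ s :: l))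
          simp at hs
          omega
      have eb : b.blocks = [] := by
        cases hbb : b.blocks with
        | nil => rfl
        | cons s l =>
          exfalso
          have hs := b.blocks_sum
          rw [hbb] at hs
          have hp := b.blocks_pos (hbb ▸ (List.mem_cons_self : s ∈ s :: l))
          simp at hs
          omega
      exact Composition.ext (ea.trans eb.symm)
    · obtain ⟨s, l, ha⟩ : ∃ s l, a.blocks = s :: l := by
        cases hab : a.blocks with
        | nil =>
          exfalso
          have hs := a.blocks_sum
          rw [hab] at hs
          simp at hs
          omega
        | cons s l => exact ⟨s, l, rfl⟩
      obtain ⟨t, m, hb⟩ : ∃ t m, b.blocks = t :: m := by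
        cases hbb : b.blocks with
        | nil =>
          exfalso
          have hs := b.blocks_sum
          rw [hbb] at hs
          simp at hs
          omega
        | cons t m => exact ⟨t, m, rfl⟩
      have hsa : a.blocksFun ⟨0, length_pos hn a⟩ = s := by simp [Composition.blocksFun, ha]
      have htb : b.blocksFun ⟨0, length_pos hn b⟩ = t := by simp [Composition.blocksFun, hb]
      have hs1 : 1 ≤ s := a.blocks_pos (ha ▸ (List.mem_cons_self : s ∈ s :: l))
      have ht1 : 1 ≤ t := b.blocks_pos (hb ▸ (List.mem_cons_self : t ∈ t :: m))
      have hsn : s ≤ n := by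
        have hs := a.blocks_sum
        rw [ha] at hs
        simp at hs
        omega
      have htn : t ≤ n := by
        have hs := b.blocks_sum
        rw [hb] at hs
        simp at hs
        omega
      have hst : s = t := by
        rcases Nat.lt_or_ge s 2 with hs2 | hs2
        · by_contra hne
          have ht2 : 2 ≤ t := by
            by_contra ht2
            have : t = s := by omega
            exact hne this.symm
          have hkb : (t - 1 : ℕ) < n := by omega
          have he : CompEdge b ⟨0, hn⟩ ⟨t-1, hkb⟩ := by
            rw [compEdge_zero_iff hn b, htb]
            exact ⟨ht2, by show t - 1 + 2 = t + 1; omega⟩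
          have he' := (h _ _).2 he
          rw [compEdge_zero_iff hn a, hsa] at he'
          omega
        · have hka : (s - 1 : ℕ) < n := by omega
          have he : CompEdge a ⟨0, hn⟩ ⟨s-1, hka⟩ := by
            rw [compEdge_zero_iff hn a, hsa]
            exact ⟨hs2, by show s - 1 + 2 = s + 1; omega⟩
          have he' := (h _ _).1 he
          rw [compEdge_zero_iff hn b, htb] at he'
          have := he'.2
          simp only [Fin.val_mk] at this
          omega
      subst hst
      have hla : l.sum = n - s := by
        have hs := a.blocks_sum
        rw [ha] at hs
        simp at hs
        omega
      have hma : m.sum = n - s := by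
        have hs := b.blocks_sum
        rw [hb] at hs
        simp at hs
        omega
      let a' : Composition (n - s) := ⟨l, fun hi => a.blocks_pos (ha ▸ List.mem_cons_of_mem s hi), hla⟩
      let b' : Composition (n - s) := ⟨m, fun hi => b.blocks_pos (hb ▸ List.mem_cons_of_mem s hi), hma⟩
      have hrec : a' = b' := by
        apply IH (n - s) (by omega)
        intro j k
        have hj : s + (j:ℕ) < n := by have := j.2; omega
        have hk : s + (k:ℕ) < n := by have := k.2; omega
        rw [← compEdge_shift a ha a' rfl j k hj hk, ← compEdge_shift b hb b' rfl j k hj hk]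
        exact h _ _
      have hlm : l = m := congrArg Composition.blocks hrec
      exact Composition.ext (by rw [ha, hb, hlm])

lemma reach_closed {V : Type*} {G : SimpleGraph V} {S : Set V}
    (hS : ∀ x ∈ S, ∀ y, G.Adj x y → y ∈ S) :
    ∀ {v u : V}, G.Reachable v u → v ∈ S → u ∈ S := by
  intro v u h
  obtain ⟨p⟩ := h
  induction p with
  | nil => exact fun hv => hv
  | cons hadj p ih => exact fun hv => ih (hS _ hv _ hadj)

lemma meander_main (n : ℕ) (a b : Composition n) :
    2 * cycleCount a b + pathCount a b ≤ n ∧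
    (2 * cycleCount a b + pathCount a b = n →
      ∀ j k, (CompEdge a j k ↔ CompEdge b j k)) ∧
    ((∀ j k, (CompEdge a j k ↔ CompEdge b j k)) →
      2 * cycleCount a b + pathCount a b = n) := by
  classical
  letI : Fintype (Meander a b).ConnectedComponent := Fintype.ofFinite _
  set G := Meander a b with hG
  let mk : Fin n → G.ConnectedComponent := G.connectedComponentMk
  let fib : G.ConnectedComponent → Finset (Fin n) :=
    fun c => Finset.univ.filter fun v => mk v = c
  let g : G.ConnectedComponent → ℕ := fun c => if IsCycleComp a b c then 2 else 1
  have htot : ∑ c, (fib c).card = n := by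
    have h1 : (Finset.univ : Finset (Fin n)).card = ∑ c, (fib c).card :=
      Finset.card_eq_sum_card_fiberwise (fun v _ => Finset.mem_univ (mk v))
    rw [← h1]
    simp
  have hsumg : ∑ c, g c = 2 * cycleCount a b + pathCount a b := by
    have h1 : cycleCount a b = (Finset.univ.filter (IsCycleComp a b)).card := by
      rw [cycleCount, Nat.card_eq_fintype_card, Fintype.card_subtype]
    have h2 : pathCount a b = (Finset.univ.filter (fun c => ¬ IsCycleComp a b c)).card := by
      rw [pathCount, Nat.card_eq_fintype_card, Fintype.card_subtype]
    rw [Finset.sum_ite, Finset.sum_const, Finset.sum_const, smul_eq_mul, smul_eq_mul, h1, h2]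
    ring
  have hmem : ∀ (v : Fin n) (c), v ∈ fib c ↔ mk v = c := by
    intro v c
    simp [fib]
  have hge : ∀ c, g c ≤ (fib c).card := by
    intro c
    obtain ⟨v, hv⟩ := c.exists_rep
    by_cases hc : IsCycleComp a b c
    · obtain ⟨⟨w, hw⟩, -⟩ := hc v hv
      have hadj : G.Adj v w := Or.inl hw
      have hmkw : mk w = c := (SimpleGraph.ConnectedComponent.sound hadj.symm.reachable).trans hv
      have hsub : ({v, w} : Finset (Fin n)) ⊆ fib c := by
        intro x hx
        rcases Finset.mem_insert.1 hx with rfl | hx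
        · exact (hmem x c).2 hv
        · rcases Finset.mem_singleton.1 hx with rfl
          exact (hmem x c).2 hmkw
      have hcard : ({v, w} : Finset (Fin n)).card = 2 := Finset.card_pair hw.1
      have := Finset.card_le_card hsub
      simp only [g, hc, if_pos]
      omega
    · have hvin : v ∈ fib c := (hmem v c).2 hv
      have : 0 < (fib c).card := Finset.card_pos.2 ⟨v, hvin⟩
      simp only [g, hc, if_neg, not_false_iff]
      omega
  have hle : ∑ c, g c ≤ ∑ c, (fib c).card := Finset.sum_le_sum fun c _ => hge c
  refine ⟨by omega, ?_, ?_⟩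
  · intro heq j k
    have hpt : ∀ c, (fib c).card = g c := by
      have := (Finset.sum_eq_sum_iff_of_le fun c (_ : c ∈ Finset.univ) => hge c).1
        (by omega)
      exact fun c => (this c (Finset.mem_univ c)).symm
    have key : ∀ (j k : Fin n), G.Adj j k → IsCycleComp a b (mk j) ∧
        ∀ u, mk u = mk j → u = j ∨ u = k := by
      intro j k hadj
      have hne : j ≠ k := G.ne_of_adj hadj
      have hmkk : mk k = mk j := SimpleGraph.ConnectedComponent.sound hadj.symm.reachable
      have hsub : ({j, k} : Finset (Fin n)) ⊆ fib (mk j) := by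
        intro x hx
        rcases Finset.mem_insert.1 hx with rfl | hx
        · exact (hmem x _).2 rfl
        · rcases Finset.mem_singleton.1 hx with rfl
          exact (hmem x _).2 hmkk
      have hcard2 : 2 ≤ (fib (mk j)).card := by
        have := Finset.card_le_card hsub
        rwa [Finset.card_pair hne] at this
      have hcyc : IsCycleComp a b (mk j) := by
        by_contra hc
        have := hpt (mk j)
        simp only [g, hc, if_neg, not_false_iff] at this
        omega
      refine ⟨hcyc, fun u hu => ?_⟩
      by_contra hne2
      push_neg at hne2
      have huin : u ∈ fib (mk j) := (hmem u _).2 hu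
      have hsub3 : ({u, j, k} : Finset (Fin n)) ⊆ fib (mk j) := by
        intro x hx
        rcases Finset.mem_insert.1 hx with rfl | hx
        · exact huin
        · exact hsub hx
      have hcard3 : ({u, j, k} : Finset (Fin n)).card = 3 := by
        rw [Finset.card_insert_of_notMem (by simp [hne2.1, hne2.2]), Finset.card_pair hne]
      have := Finset.card_le_card hsub3
      have := hpt (mk j)
      simp only [g, hcyc, if_pos] at this
      omega
    constructor
    · intro hjk
      obtain ⟨hcyc, hmem2⟩ := key j k (Or.inl hjk)
      obtain ⟨-, w, hw⟩ := hcyc j rfl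
      rcases hmem2 w (SimpleGraph.ConnectedComponent.sound
        (SimpleGraph.Adj.symm (Or.inr hw)).reachable) with rfl | rfl
      · exact absurd rfl hw.1
      · exact hw
    · intro hjk
      obtain ⟨hcyc, hmem2⟩ := key j k (Or.inr hjk)
      obtain ⟨⟨w, hw⟩, -⟩ := hcyc j rfl
      rcases hmem2 w (SimpleGraph.ConnectedComponent.sound
        (SimpleGraph.Adj.symm (Or.inl hw)).reachable) with rfl | rfl
      · exact absurd rfl hw.1
      · exact hw
  · intro hrel
    have hpt : ∀ c, (fib c).card = g c := by
      intro c
      obtain ⟨v, hv⟩ := c.exists_rep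
      by_cases hcov : ∃ w, CompEdge a v w
      · obtain ⟨w, hw⟩ := hcov
        have hadj : G.Adj v w := Or.inl hw
        have hmkw : mk w = c := (SimpleGraph.ConnectedComponent.sound hadj.symm.reachable).trans hv
        have hclosed : ∀ x ∈ ({v, w} : Set (Fin n)), ∀ y, G.Adj x y → y ∈ ({v, w} : Set (Fin n)) := by
          rintro x (rfl | hx) y hy
          · rcases hy with hy | hy
            · exact Or.inr (hw.unique hy ▸ rfl)
            · exact Or.inr (hw.unique ((hrel _ _).2 hy) ▸ rfl)
          · rcases hx with rfl
            rcases hy with hy | hy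
            · exact Or.inl (hw.symm.unique hy ▸ rfl)
            · exact Or.inl (hw.symm.unique ((hrel _ _).2 hy) ▸ rfl)
        have hfib : fib c = {v, w} := by
          apply Finset.Subset.antisymm
          · intro u hu
            have hmu : mk u = mk v := ((hmem u c).1 hu).trans hv.symm
            have hr : G.Reachable v u := (SimpleGraph.ConnectedComponent.exact hmu).symm
            have := reach_closed hclosed hr (Or.inl rfl)
            rcases this with rfl | h2
            · exact Finset.mem_insert_self _ _
            · rcases h2 with rfl
              exact Finset.mem_insert_of_mem (Finset.mem_singleton_self _)
          · intro x hx
            rcases Finset.mem_insert.1 hx with rfl | hx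
            · exact (hmem x c).2 hv
            · rcases Finset.mem_singleton.1 hx with rfl
              exact (hmem x c).2 hmkw
        have hcyc : IsCycleComp a b c := by
          intro u hu
          have huin : u ∈ fib c := (hmem u c).2 hu
          rw [hfib] at huin
          rcases Finset.mem_insert.1 huin with rfl | hx
          · exact ⟨⟨w, hw⟩, ⟨w, (hrel _ _).1 hw⟩⟩
          · rcases Finset.mem_singleton.1 hx with rfl
            exact ⟨⟨v, hw.symm⟩, ⟨v, (hrel _ _).1 hw.symm⟩⟩
        rw [hfib, Finset.card_pair hw.1]
        simp [g, hcyc]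
      · have hclosed : ∀ x ∈ ({v} : Set (Fin n)), ∀ y, G.Adj x y → y ∈ ({v} : Set (Fin n)) := by
          rintro x rfl y hy
          rcases hy with hy | hy
          · exact absurd ⟨y, hy⟩ hcov
          · exact absurd ⟨y, (hrel _ _).2 hy⟩ hcov
        have hfib : fib c = {v} := by
          apply Finset.Subset.antisymm
          · intro u hu
            have hmu : mk u = mk v := ((hmem u c).1 hu).trans hv.symm
            have hr : G.Reachable v u := (SimpleGraph.ConnectedComponent.exact hmu).symm
            have := reach_closed hclosed hr rfl
            rcases this with rfl
            exact Finset.mem_singleton_self _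
          · intro x hx
            rcases Finset.mem_singleton.1 hx with rfl
            exact (hmem x c).2 hv
        have hcyc : ¬ IsCycleComp a b c := by
          intro hcyc
          exact hcov (hcyc v hv).1
        rw [hfib, Finset.card_singleton]
        simp [g, hcyc]
    have : ∑ c, (fib c).card = ∑ c, g c := Finset.sum_congr rfl fun c _ => hpt c
    omega

lemma seaweedInd_eq_iff {n : ℕ} (hn : 0 < n) (a b : Composition n) :
    seaweedInd a b = n - 1 ↔ a = b := by
  obtain ⟨hle, h2, h3⟩ := meander_main n a b
  constructor
  · intro h
    have h1 : 1 ≤ 2 * cycleCount a b + pathCount a b := by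
      by_cases hc : IsCycleComp a b ((Meander a b).connectedComponentMk ⟨0, hn⟩)
      · haveI : Nonempty {c : (Meander a b).ConnectedComponent // IsCycleComp a b c} :=
          ⟨⟨_, hc⟩⟩
        have : 0 < cycleCount a b := Nat.card_pos
        omega
      · haveI : Nonempty {c : (Meander a b).ConnectedComponent // ¬ IsCycleComp a b c} :=
          ⟨⟨_, hc⟩⟩
        have : 0 < pathCount a b := Nat.card_pos
        omega
    rw [seaweedInd] at h
    exact comp_eq_of_edge_iff n a b (h2 (by omega))
  · rintro rfl
    rw [seaweedInd, h3 (fun j k => Iff.rfl)]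

lemma Cnk_eq {n : ℕ} (hn : 1 ≤ n) : Cnk n (n - 1) = 2 ^ (n - 1) := by
  rw [Cnk]
  have e1 : ∀ p : Composition n × Composition n, seaweedInd p.1 p.2 = n - 1 ↔ p.1 = p.2 :=
    fun p => seaweedInd_eq_iff hn p.1 p.2
  have e2 : {p : Composition n × Composition n // p.1 = p.2} ≃ Composition n :=
    { toFun := fun p => p.1.1
      invFun := fun c => ⟨(c, c), rfl⟩
      left_inv := by
        rintro ⟨⟨x, y⟩, h⟩
        cases h
        rfl
      right_inv := fun c => rfl }
  rw [Nat.card_congr ((Equiv.subtypeEquivRight e1).trans e2), Nat.card_eq_fintype_card,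
    composition_card]

theorem genfun_C_n_nsub1 :
    (1 - 2 * PowerSeries.X) *
      PowerSeries.mk (fun n => if 1 ≤ n then ((Cnk n (n - 1) : ℚ)) else 0) =
    (PowerSeries.X : PowerSeries ℚ) := by
  apply PowerSeries.ext
  intro k
  rw [sub_mul, one_mul, map_sub, mul_assoc]
  have h2 : (2 : PowerSeries ℚ) = (PowerSeries.C : ℚ →+* PowerSeries ℚ) 2 := by
    exact_mod_cast (map_ofNat (PowerSeries.C : ℚ →+* PowerSeries ℚ) 2).symm
  rw [h2, PowerSeries.coeff_C_mul]
  rcases k with _ | m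
  · simp [PowerSeries.coeff_mk, PowerSeries.coeff_zero_X_mul, PowerSeries.coeff_X]
  · rw [PowerSeries.coeff_succ_X_mul, PowerSeries.coeff_mk, PowerSeries.coeff_mk,
      PowerSeries.coeff_X]
    rcases m with _ | m'
    · norm_num [Cnk_eq (le_refl 1)]
    · have c1 : Cnk (m' + 2) (m' + 2 - 1) = 2 ^ (m' + 1) := Cnk_eq (by omega)
      have c2 : Cnk (m' + 1) (m' + 1 - 1) = 2 ^ m' := Cnk_eq (by omega)
      simp only [show (1:ℕ) ≤ m' + 2 by omega, show (1:ℕ) ≤ m' + 1 by omega, if_pos, c1, c2,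
        if_neg (show ¬ (m' + 1 + 1 = 1) by omega)]
      push_cast
      ring
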